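/- Let (V,h) be a real quadratic space of signature (p,q) with p − q congruent to 3 or 7 modulo 8, and let η: Cl(V,h) → End_ℝ(Σ) and η': Cl(V,h) → End_ℝ(Σ') be irreducible real Clifford representations. Let J ∈ End_ℝ(Σ) satisfy J∘J = −id and commute with η(x) for all x, and let J' ∈ End_ℝ(Σ') satisfy J'∘J' = −id and commute with η'(x) for all x. Then every equivalence ψ: Σ → Σ' (an ℝ-linear bijection with ψ∘η(x) = η'(x)∘ψ for all x ∈ Cl(V,h)) satisfies either ψ∘J = J'∘ψ or ψ∘J = −J'∘ψ. -/

import Mathlib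

noncomputable section

namespace RealCliffordRep

/-- `(V,h)` has signature `(p,q)`: there is a basis `e₁,…,e_{p+q}` with
`h(eᵢ,eⱼ) = 0` for `i ≠ j`, `h(eᵢ,eᵢ) = 1` for `i ≤ p` and `h(eᵢ,eᵢ) = -1` for `i > p`. -/
def HasSignature {V : Type*} [AddCommGroup V] [Module ℝ V]
    (h : LinearMap.BilinForm ℝ V) (p q : ℕ) : Prop :=
  ∃ b : Module.Basis (Fin (p + q)) ℝ V, ∀ i j : Fin (p + q),
    h (b i) (b j) = if i = j then (if (i : ℕ) < p then 1 else -1) else 0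

/-- A real Clifford representation is irreducible if the only invariant real subspaces
of `Σ` are `0` and `Σ`. -/
def IsIrredReal {V : Type*} [AddCommGroup V] [Module ℝ V]
    {Sg : Type*} [AddCommGroup Sg] [Module ℝ Sg]
    (Q : QuadraticForm ℝ V) (η : CliffordAlgebra Q →ₐ[ℝ] Module.End ℝ Sg) : Prop :=
  ∀ W : Submodule ℝ Sg, (∀ (x : CliffordAlgebra Q), ∀ w ∈ W, η x w ∈ W) → W = ⊥ ∨ W = ⊤

end RealCliffordRep

namespace RCRaux


lemma mul_list_prod_anticomm {A : Type*} [Ring A] (x : A) :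
    ∀ l : List A, (∀ y ∈ l, x * y = -(y * x)) →
      x * l.prod = (-1 : ℤ) ^ l.length • (l.prod * x)
  | [] => fun _ => by simp
  | a :: t => fun hl => by
    have ha := hl a List.mem_cons_self
    have ht := mul_list_prod_anticomm x t (fun y hy => hl y (List.mem_cons_of_mem a hy))
    simp only [List.prod_cons, List.length_cons]
    calc x * (a * t.prod) = (x * a) * t.prod := (mul_assoc _ _ _).symm
      _ = -(a * (x * t.prod)) := by rw [ha, neg_mul, mul_assoc]
      _ = -(a * ((-1 : ℤ) ^ t.length • (t.prod * x))) := by rw [ht]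
      _ = (-1 : ℤ) ^ (t.length + 1) • (a * t.prod * x) := by
          rw [mul_smul_comm, ← neg_smul, mul_assoc]
          congr 1
          rw [pow_succ]; ring

lemma list_prod_sq {A : Type*} [Ring A] :
    ∀ l : List A, l.Pairwise (fun a b => a * b = -(b * a)) →
      l.prod * l.prod
        = (-1 : ℤ) ^ (∑ i ∈ Finset.range l.length, i) • (l.map (fun y => y * y)).prod
  | [] => fun _ => by simp
  | a :: t => fun hl => by
    obtain ⟨ha, ht⟩ := List.pairwise_cons.mp hl
    have h1 := mul_list_prod_anticomm a t ha
    have hs : (-1 : ℤ) ^ t.length * (-1 : ℤ) ^ t.length = 1 := by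
      rw [← pow_add]; exact Even.neg_one_pow ⟨t.length, rfl⟩
    have h1' : t.prod * a = (-1 : ℤ) ^ t.length • (a * t.prod) := by
      rw [h1, smul_smul, hs, one_smul]
    have h2 := list_prod_sq t ht
    simp only [List.prod_cons, List.map_cons, List.length_cons, Finset.sum_range_succ]
    calc (a * t.prod) * (a * t.prod)
        = a * ((t.prod * a) * t.prod) := by rw [mul_assoc, ← mul_assoc t.prod a t.prod]
      _ = a * (((-1 : ℤ) ^ t.length • (a * t.prod)) * t.prod) := by rw [h1']
      _ = (-1 : ℤ) ^ t.length • (a * (a * (t.prod * t.prod))) := by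
          rw [smul_mul_assoc, mul_smul_comm, mul_assoc]
      _ = (-1 : ℤ) ^ t.length • (a * (a * ((-1 : ℤ) ^ (∑ i ∈ Finset.range t.length, i) •
            (t.map (fun y => y * y)).prod))) := by rw [h2]
      _ = (-1 : ℤ) ^ ((∑ i ∈ Finset.range t.length, i) + t.length) •
            (a * a * (t.map (fun y => y * y)).prod) := by
          rw [mul_smul_comm, mul_smul_comm, smul_smul, ← pow_add, add_comm, ← mul_assoc]

lemma mul_ofFn_prod {A : Type*} [Ring A] :
    ∀ (n : ℕ) (f : Fin n → A), (∀ i j, i ≠ j → f i * f j = -(f j * f i)) →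
      ∀ i, f i * (List.ofFn f).prod = (-1 : ℤ) ^ (n - 1) • ((List.ofFn f).prod * f i)
  | 0 => fun _ _ i => i.elim0
  | n + 1 => fun f hf i => by
    rw [List.ofFn_succ]
    set g : Fin n → A := fun j => f j.succ with hg
    set P : A := (List.ofFn g).prod with hP
    have hlen : (List.ofFn g).length = n := List.length_ofFn
    have hgs : ∀ a b : Fin n, a ≠ b → g a * g b = -(g b * g a) := fun a b hab =>
      hf a.succ b.succ (fun hc => hab (Fin.succ_injective n hc))
    have hanti0 : ∀ y ∈ List.ofFn g, f 0 * y = -(y * f 0) := by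
      intro y hy
      rcases List.mem_ofFn.mp hy with ⟨j, rfl⟩
      exact hf 0 j.succ (fun hc => Fin.succ_ne_zero j hc.symm)
    have h1 : f 0 * P = (-1 : ℤ) ^ n • (P * f 0) := by
      have := mul_list_prod_anticomm (f 0) (List.ofFn g) hanti0
      rwa [hlen] at this
    have hs : (-1 : ℤ) ^ n * (-1 : ℤ) ^ n = 1 := by
      rw [← pow_add]; exact Even.neg_one_pow ⟨n, rfl⟩
    have h1' : P * f 0 = (-1 : ℤ) ^ n • (f 0 * P) := by
      rw [h1, smul_smul, hs, one_smul]
    simp only [List.prod_cons, Nat.add_sub_cancel]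
    refine Fin.cases ?_ ?_ i
    · rw [mul_assoc, h1', mul_smul_comm, smul_smul, hs, one_smul, ← mul_assoc]
    · intro j
      obtain ⟨m, rfl⟩ : ∃ m, n = m + 1 := ⟨n - 1, (Nat.succ_pred_eq_of_pos (Fin.pos j)).symm⟩
      have hIH := mul_ofFn_prod (m + 1) g hgs j
      simp only [Nat.add_sub_cancel] at hIH
      have hj0 : f j.succ * f 0 = -(f 0 * f j.succ) := hf j.succ 0 (Fin.succ_ne_zero j)
      calc f j.succ * (f 0 * P)
          = (f j.succ * f 0) * P := (mul_assoc _ _ _).symm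
        _ = -(f 0 * (f j.succ * P)) := by rw [hj0, neg_mul, mul_assoc]
        _ = -(f 0 * ((-1 : ℤ) ^ m • (P * f j.succ))) := by
            rw [show f j.succ * P = (-1 : ℤ) ^ m • (P * f j.succ) from hIH]
        _ = (-1 : ℤ) ^ (m + 1) • (f 0 * P * f j.succ) := by
            rw [mul_smul_comm, ← neg_smul, mul_assoc]
            congr 1
            rw [pow_succ]; ring


end RCRaux

open RealCliffordRep in
/-- For `(V,h)` of signature `(p,q)` with `p − q ≡ 3, 7 (mod 8)`, irreducible real Clifford
representations `η, η'` with commuting complex structures `J, J'`, every equivalence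
`ψ : Σ → Σ'` of representations satisfies `ψ∘J = J'∘ψ` or `ψ∘J = -J'∘ψ`. -/
theorem equivalence_commutes_or_anticommutes_with_complex_structures
    {V : Type*} [AddCommGroup V] [Module ℝ V] [FiniteDimensional ℝ V]
    {Sg Sg' : Type*} [AddCommGroup Sg] [Module ℝ Sg] [FiniteDimensional ℝ Sg] [Nontrivial Sg]
    [AddCommGroup Sg'] [Module ℝ Sg'] [FiniteDimensional ℝ Sg'] [Nontrivial Sg']
    (h : LinearMap.BilinForm ℝ V) (hsymm : h.IsSymm) (hnd : h.Nondegenerate)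
    (p q : ℕ) (hsig : HasSignature h p q)
    (hmod : ((p : ℤ) - q) % 8 = 3 ∨ ((p : ℤ) - q) % 8 = 7)
    (η : CliffordAlgebra h.toQuadraticMap →ₐ[ℝ] Module.End ℝ Sg)
    (hirr : IsIrredReal h.toQuadraticMap η)
    (η' : CliffordAlgebra h.toQuadraticMap →ₐ[ℝ] Module.End ℝ Sg')
    (hirr' : IsIrredReal h.toQuadraticMap η')
    (J : Module.End ℝ Sg) (hJ : J * J = -1)
    (hJc : ∀ x : CliffordAlgebra h.toQuadraticMap, J * η x = η x * J)
    (J' : Module.End ℝ Sg') (hJ' : J' * J' = -1)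
    (hJ'c : ∀ x : CliffordAlgebra h.toQuadraticMap, J' * η' x = η' x * J')
    (ψ : Sg ≃ₗ[ℝ] Sg')
    (hψ : ∀ x : CliffordAlgebra h.toQuadraticMap,
      ψ.toLinearMap ∘ₗ η x = η' x ∘ₗ ψ.toLinearMap) :
    ψ.toLinearMap ∘ₗ J = J' ∘ₗ ψ.toLinearMap ∨
      ψ.toLinearMap ∘ₗ J = (-J') ∘ₗ ψ.toLinearMap := by
  classical
  have hmod4 : ((p : ℤ) - q) % 4 = 3 := by rcases hmod with h1 | h1 <;> omega
  obtain ⟨b, hb⟩ := hsig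
  -- the basis generators
  set f : Fin (p + q) → CliffordAlgebra h.toQuadraticMap := fun i => CliffordAlgebra.ι h.toQuadraticMap (b i) with hf
  have hanti : ∀ i j : Fin (p + q), i ≠ j → f i * f j = -(f j * f i) := by
    intro i j hij
    have hpolar : QuadraticMap.polar h.toQuadraticMap (b i) (b j) = 0 := by
      rw [LinearMap.BilinMap.polar_toQuadraticMap, hb i j, hb j i,
        if_neg hij, if_neg (Ne.symm hij), add_zero]
    have h2 := CliffordAlgebra.ι_mul_ι_add_swap (Q := h.toQuadraticMap) (b i) (b j)
    rw [hpolar, map_zero] at h2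
    exact eq_neg_of_add_eq_zero_left h2
  have hsq : ∀ i : Fin (p + q), f i * f i
      = algebraMap ℝ (CliffordAlgebra h.toQuadraticMap) (if (i : ℕ) < p then 1 else -1) := by
    intro i
    rw [hf]
    rw [CliffordAlgebra.ι_sq_scalar]
    congr 1
    rw [LinearMap.BilinMap.toQuadraticMap_apply, hb i i, if_pos rfl]
  -- the volume element
  set ω : CliffordAlgebra h.toQuadraticMap := (List.ofFn f).prod with hω
  have hnodd : (p + q) % 2 = 1 := by omega
  -- ω commutes with the generators
  have hcomm_gen : ∀ i : Fin (p + q), f i * ω = ω * f i := by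
    intro i
    have hmv := RCRaux.mul_ofFn_prod (p + q) f hanti i
    rw [hω, hmv, Even.neg_one_pow (⟨(p + q - 1) / 2, by omega⟩ : Even (p + q - 1)), one_smul]
  -- ω is central
  have hcent : ∀ x : CliffordAlgebra h.toQuadraticMap, ω * x = x * ω := by
    have hι : ∀ v : V, ω * CliffordAlgebra.ι h.toQuadraticMap v = CliffordAlgebra.ι h.toQuadraticMap v * ω := by
      intro v
      have hv : v = ∑ i, b.repr v i • b i := (b.sum_repr v).symm
      rw [hv]
      simp only [map_sum, map_smul]
      rw [Finset.mul_sum, Finset.sum_mul]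
      refine Finset.sum_congr rfl (fun i _ => ?_)
      rw [mul_smul_comm, smul_mul_assoc, hcomm_gen i]
    intro x
    induction x using CliffordAlgebra.induction with
    | algebraMap r => exact (Algebra.commutes r ω).symm
    | ι v => exact hι v
    | mul a c ha hc => rw [← mul_assoc, ha, mul_assoc, hc, ← mul_assoc]
    | add a c ha hc => rw [mul_add, ha, hc, add_mul]
  -- ω squares to -1
  have hω2 : ω * ω = -1 := by
    set E := ∑ i ∈ Finset.range (p + q), i with hE
    have hpair : (List.ofFn f).Pairwise (fun a b => a * b = -(b * a)) :=
      List.pairwise_ofFn.mpr (fun i j hij => hanti i j hij.ne)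
    have h2 := RCRaux.list_prod_sq (List.ofFn f) hpair
    rw [List.length_ofFn] at h2
    set g : Fin (p + q) → ℝ := fun i => if (i : ℕ) < p then 1 else -1 with hg
    have hmap : (List.ofFn f).map (fun y => y * y)
        = (List.ofFn g).map (algebraMap ℝ (CliffordAlgebra h.toQuadraticMap)) := by
      rw [List.map_ofFn, List.map_ofFn]
      exact congrArg List.ofFn (funext fun i => hsq i)
    have hprodmap : ((List.ofFn g).map (algebraMap ℝ (CliffordAlgebra h.toQuadraticMap))).prod
        = algebraMap ℝ (CliffordAlgebra h.toQuadraticMap) ((List.ofFn g).prod) :=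
      (map_list_prod ((algebraMap ℝ (CliffordAlgebra h.toQuadraticMap)) : ℝ →+* CliffordAlgebra h.toQuadraticMap) _).symm
    have hgprod : (List.ofFn g).prod = (-1 : ℝ) ^ q := by
      rw [List.prod_ofFn]
      rw [Fin.prod_univ_add (f := g)]
      have h1 : ∀ i : Fin p, g (Fin.castAdd q i) = 1 := by
        intro i; rw [hg]; simp [Fin.coe_castAdd, i.isLt]
      have h2' : ∀ i : Fin q, g (Fin.natAdd p i) = -1 := by
        intro i; rw [hg]; simp [Fin.coe_natAdd]
      rw [Finset.prod_congr rfl (fun i _ => h1 i), Finset.prod_congr rfl (fun i _ => h2' i)]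
      simp
    have hodd : Odd (E + q) := by
      have hgauss := Finset.sum_range_id_mul_two (p + q)
      have hcase : (p + q) % 4 = 3 ∧ q % 2 = 0 ∨ (p + q) % 4 = 1 ∧ q % 2 = 1 := by omega
      rcases hcase with ⟨h4, hq⟩ | ⟨h4, hq⟩
      · obtain ⟨a, ha⟩ : ∃ a, p + q = 4 * a + 3 := ⟨(p + q) / 4, by omega⟩
        obtain ⟨t, ht⟩ : ∃ t, a * a = t := ⟨_, rfl⟩
        have h5 : (p + q) * (p + q - 1) = (8 * t + 10 * a + 3) * 2 := by
          have hb1 : p + q - 1 = 4 * a + 2 := by omega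
          rw [hb1, ha, ← ht]; ring
        rw [h5] at hgauss
        refine ⟨4 * t + 5 * a + 1 + q / 2, by omega⟩
      · obtain ⟨a, ha⟩ : ∃ a, p + q = 4 * a + 1 := ⟨(p + q) / 4, by omega⟩
        obtain ⟨t, ht⟩ : ∃ t, a * a = t := ⟨_, rfl⟩
        have h5 : (p + q) * (p + q - 1) = (8 * t + 2 * a) * 2 := by
          have hb1 : p + q - 1 = 4 * a := by omega
          rw [hb1, ha, ← ht]; ring
        rw [h5] at hgauss
        refine ⟨4 * t + a + q / 2, by omega⟩
    rw [hω, h2, hmap, hprodmap, hgprod]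
    rw [map_pow, map_neg, map_one]
    rw [zsmul_eq_mul]
    push_cast
    rw [← pow_add]
    exact Odd.neg_one_pow hodd
  -- the complex structure from ω
  set c : Module.End ℝ Sg := η ω with hc
  have hc2 : c * c = -1 := by rw [hc, ← map_mul, hω2, map_neg, map_one]
  have hcη : ∀ x, c * η x = η x * c := by
    intro x; rw [hc, ← map_mul, ← map_mul, hcent x]
  -- Schur
  have schur : ∀ T : Module.End ℝ Sg, (∀ x, T * η x = η x * T) →
      T = 0 ∨ Function.Bijective T := by
    intro T hT
    by_cases hT0 : T = 0
    · exact Or.inl hT0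
    · right
      have hTcomm : ∀ x w, T (η x w) = η x (T w) := by
        intro x w
        have := congrArg (fun S : Module.End ℝ Sg => S w) (hT x)
        simpa using this
      constructor
      · have hker := hirr (LinearMap.ker T) (fun x w hw => by
          rw [LinearMap.mem_ker] at hw ⊢
          rw [hTcomm, hw, map_zero])
        rcases hker with hk | hk
        · exact LinearMap.ker_eq_bot.mp hk
        · exact absurd (LinearMap.ker_eq_top.mp hk) hT0
      · have hrg := hirr (LinearMap.range T) (fun x w hw => by
          obtain ⟨u, rfl⟩ := hw
          exact ⟨η x u, hTcomm x u⟩)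
        rcases hrg with hk | hk
        · exact absurd (LinearMap.range_eq_bot.mp hk) hT0
        · exact LinearMap.range_eq_top.mp hk
  -- the key dichotomy
  have key : ∀ T : Module.End ℝ Sg, (∀ x, T * η x = η x * T) → T * T = -1 →
      T = c ∨ T = -c := by
    intro T hT hT2
    have hTc : T * c = c * T := hT ω
    have hA2 : (T * c) * (T * c) = 1 := by
      calc (T * c) * (T * c) = T * ((c * T) * c) := by rw [mul_assoc, ← mul_assoc c T c]
        _ = T * ((T * c) * c) := by rw [hTc]
        _ = (T * T) * (c * c) := by rw [mul_assoc T c c, ← mul_assoc]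
        _ = 1 := by rw [hT2, hc2]; simp
    have hcomA : ∀ x, (T * c - 1) * η x = η x * (T * c - 1) := by
      intro x
      have h1 : (T * c) * η x = η x * (T * c) := by
        rw [mul_assoc, hcη x, ← mul_assoc, hT x, mul_assoc]
      rw [sub_mul, mul_sub, h1, one_mul, mul_one]
    rcases schur (T * c - 1) hcomA with h0 | hbij
    · right
      have hA1 : T * c = 1 := by rwa [sub_eq_zero] at h0
      calc T = -(T * (c * c)) := by rw [hc2, mul_neg, mul_one, neg_neg]
        _ = -((T * c) * c) := by rw [mul_assoc]
        _ = -c := by rw [hA1, one_mul]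
    · left
      have hprod : (T * c - 1) * (T * c + 1) = 0 := by
        have hexp : (T * c - 1) * (T * c + 1) = (T * c) * (T * c) - 1 := by noncomm_ring
        rw [hexp, hA2, sub_self]
      have hA1 : T * c + 1 = 0 := by
        ext w
        have h1 : (T * c - 1) ((T * c + 1) w) = (T * c - 1) 0 := by
          rw [map_zero, ← Module.End.mul_apply, hprod]
          simp
        have := hbij.injective h1
        simpa using this
      have hA1' : T * c = -1 := by
        have := congrArg (fun S => S - 1) hA1
        simpa [sub_eq_iff_eq_add] using eq_neg_of_add_eq_zero_left hA1
      calc T = -(T * (c * c)) := by rw [hc2, mul_neg, mul_one, neg_neg]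
        _ = -((T * c) * c) := by rw [mul_assoc]
        _ = c := by rw [hA1']; simp
  -- apply to J
  have hJcase := key J hJc hJ
  -- the pulled-back complex structure K
  set K : Module.End ℝ Sg := (ψ.symm.toLinearMap ∘ₗ J') ∘ₗ ψ.toLinearMap with hK
  have hKapp : ∀ w, K w = ψ.symm (J' (ψ w)) := fun w => rfl
  have hψ' : ∀ x w, ψ (η x w) = η' x (ψ w) := by
    intro x w
    have := congrArg (fun S : Sg →ₗ[ℝ] Sg' => S w) (hψ x)
    simpa using this
  have hJ'app : ∀ x w', J' (η' x w') = η' x (J' w') := by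
    intro x w'
    have := congrArg (fun S : Module.End ℝ Sg' => S w') (hJ'c x)
    simpa using this
  have hK2 : K * K = -1 := by
    ext w
    have hJ'2 : ∀ w', J' (J' w') = -w' := by
      intro w'
      have := congrArg (fun S : Module.End ℝ Sg' => S w') hJ'
      simpa using this
    simp [Module.End.mul_apply, hKapp, hJ'2]
  have hKη : ∀ x, K * η x = η x * K := by
    intro x
    ext w
    rw [Module.End.mul_apply, Module.End.mul_apply, hKapp, hKapp, hψ' x w]
    rw [hJ'app]
    apply ψ.injective
    rw [ψ.apply_symm_apply]
    rw [hψ' x (ψ.symm (J' (ψ w))), ψ.apply_symm_apply]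
  have hKcase := key K hKη hK2
  -- conclude
  have hfinal : J = K ∨ J = -K := by
    rcases hJcase with h1 | h1 <;> rcases hKcase with h2 | h2
    · exact Or.inl (h1.trans h2.symm)
    · exact Or.inr (by rw [h1, h2, neg_neg])
    · exact Or.inr (by rw [h1, h2])
    · exact Or.inl (by rw [h1, h2])
  rcases hfinal with hJK | hJK
  · left
    ext w
    have : J w = K w := by rw [hJK]
    simp only [LinearMap.comp_apply]
    rw [this, hKapp]
    simp
  · right
    ext w
    have : J w = -(K w) := by rw [hJK]; rfl
    simp only [LinearMap.comp_apply]
    rw [this, hKapp]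
    simp [ψ.apply_symm_apply]
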